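/- If x is a complex number with |x| = 1, x ≠ 1, and a, b are positive reals, then the complex number x₂ = ((1+a+b)x + ab)/(ab(1 - x)) has |x₂| = 1 if and only if the real part of x equals (ab - (1+a+b))/(2ab). -/

import Mathlib

theorem thomas_phasor_unit_iff (a b : ℝ) (ha : 0 < a) (hb : 0 < b)
    (x : ℂ) (hx : ‖x‖ = 1) (hx1 : x ≠ 1) :
    ‖((1 + (a:ℂ) + b) * x + a * b) / ((a:ℂ) * b * (1 - x))‖ = 1 ↔
      x.re = (a * b - (1 + a + b)) / (2 * a * b) := by
  have hx2 : x.re ^ 2 + x.im ^ 2 = 1 := by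
    have h := Complex.sq_norm x
    rw [hx, Complex.normSq_apply] at h
    nlinarith [h]
  have hD : ((a:ℂ) * b * (1 - x)) ≠ 0 := by
    refine mul_ne_zero (mul_ne_zero ?_ ?_) (sub_ne_zero.mpr hx1.symm)
    · exact_mod_cast ha.ne'
    · exact_mod_cast hb.ne'
  have hcp : (0:ℝ) < 1 + a + b + a * b := by positivity
  rw [norm_div, div_eq_one_iff_eq (norm_ne_zero_iff.mpr hD)]
  constructor
  · intro h
    have h2 := congrArg (· ^ 2) h
    simp only [Complex.sq_norm] at h2
    simp only [Complex.normSq_apply, Complex.add_re, Complex.add_im, Complex.mul_re,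
      Complex.mul_im, Complex.sub_re, Complex.sub_im, Complex.one_re, Complex.one_im,
      Complex.ofReal_re, Complex.ofReal_im] at h2
    have key2 : (1 + a + b + a * b) * (2 * (a * b) * x.re - (a * b - (1 + a + b))) = 0 := by
      linear_combination h2 - ((1 + a + b) ^ 2 - (a * b) ^ 2) * hx2
    have h3 : 2 * (a * b) * x.re - (a * b - (1 + a + b)) = 0 := by
      rcases mul_eq_zero.mp key2 with h' | h'
      · linarith
      · exact h'
    field_simp
    linarith
  · intro h
    have hre : 2 * (a * b) * x.re = a * b - (1 + a + b) := by
      have hab : (2 : ℝ) * a * b ≠ 0 := by positivity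
      field_simp at h
      linarith [h]
    have key : Complex.normSq ((1 + (a:ℂ) + b) * x + a * b) =
        Complex.normSq ((a:ℂ) * b * (1 - x)) := by
      simp only [Complex.normSq_apply, Complex.add_re, Complex.add_im, Complex.mul_re,
        Complex.mul_im, Complex.sub_re, Complex.sub_im, Complex.one_re, Complex.one_im,
        Complex.ofReal_re, Complex.ofReal_im]
      linear_combination ((1 + a + b) ^ 2 - (a * b) ^ 2) * hx2 + (1 + a + b + a * b) * hre
    rw [Complex.norm_def, Complex.norm_def, key]
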